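/- With p(m,s) = t·m − C(s+t,t−1) (t the repetition number for (m,s)): p(m,s) ≥ m − 1 for all m ≥ 1, s ≥ 1; moreover p(m,s) = m − 1 if and only if m ≤ s + 1. -/

import Mathlib

/-- The repetition number: the least `t` with `m ≤ C(s+t, t)`. -/
noncomputable def tRep (m s : ℕ) : ℕ := sInf {t : ℕ | m ≤ (s + t).choose t}

/-- `p(m,s) = t·m − C(s+t, t−1)` with the convention `C(s,−1) = 0`. -/
noncomputable def pRev (m s : ℕ) : ℤ :=
  (tRep m s : ℤ) * m -
    (if tRep m s = 0 then 0 else ((s + tRep m s).choose (tRep m s - 1) : ℤ))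

/-- `p̃(m,s) = (t−1)·m − C(s+t, t−1) + 1` with the convention `C(s,−1) = 0`. -/
noncomputable def pMod (m s : ℕ) : ℤ :=
  ((tRep m s : ℤ) - 1) * m -
    (if tRep m s = 0 then 0 else ((s + tRep m s).choose (tRep m s - 1) : ℤ)) + 1

lemma choose_ratio (s t : ℕ) (ht : 1 ≤ t) (hs : 1 ≤ s) :
    (s + t + 1) * (s + t).choose t = (s + 1) * (s + t + 1).choose t := by
  have h1 : (s + t).choose s = (s + t).choose t := by
    have := Nat.choose_symm (n := s + t) (k := t) (by omega)
    simpa [Nat.add_sub_cancel] using this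
  have h2 : (s + t + 1).choose (s + 1) = (s + t + 1).choose t := by
    have := Nat.choose_symm (n := s + t + 1) (k := t) (by omega)
    have h3 : s + t + 1 - t = s + 1 := by omega
    rw [h3] at this
    exact this
  have h := Nat.add_one_mul_choose_eq (s + t) s
  rw [h1, h2] at h
  rw [h, Nat.mul_comm]

lemma key_ineq (s t m : ℕ) (hs : 1 ≤ s) (hm2 : s + 2 ≤ m) (ht : 1 ≤ t)
    (hmin : (s + t).choose t < m) : (s + t + 1).choose t ≤ t * m := by
  rcases Nat.lt_or_ge t 2 with h2 | h2
  · have ht1 : t = 1 := by omega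
    subst ht1
    simp [Nat.choose_one_right]
    omega
  · have hid := choose_ratio s t ht hs
    have hC : 0 < (s + t).choose t := Nat.choose_pos (by omega)
    have h4 : (s + 1) * (s + t + 1).choose t ≤ (s + 1) * (t * (s + t).choose t) := by
      rw [← hid]
      have hst : s + t + 1 ≤ (s + 1) * t := by nlinarith
      calc (s + t + 1) * (s + t).choose t ≤ ((s + 1) * t) * (s + t).choose t :=
            Nat.mul_le_mul_right _ hst
        _ = (s + 1) * (t * (s + t).choose t) := by ring
    have h5 : (s + t + 1).choose t ≤ t * (s + t).choose t :=
      Nat.le_of_mul_le_mul_left h4 (by omega)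
    calc (s + t + 1).choose t ≤ t * (s + t).choose t := h5
      _ ≤ t * m := Nat.mul_le_mul_left t (by omega)

/-- `p(m,s) ≥ m − 1` for all `m ≥ 1`, `s ≥ 1`; moreover `p(m,s) = m − 1` iff `m ≤ s + 1`. -/
theorem stmt3 (m s : ℕ) (hm : 1 ≤ m) (hs : 1 ≤ s) :
    (m : ℤ) - 1 ≤ pRev m s ∧ (pRev m s = (m : ℤ) - 1 ↔ m ≤ s + 1) := by
  have hne : {t : ℕ | m ≤ (s + t).choose t}.Nonempty := by
    refine ⟨m, ?_⟩
    simp only [Set.mem_setOf_eq]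
    calc m ≤ m + 1 := Nat.le_succ _
      _ = (m + 1).choose m := (Nat.choose_succ_self_right m).symm
      _ ≤ (s + m).choose m := Nat.choose_le_choose m (by omega)
  have hmem : m ≤ (s + tRep m s).choose (tRep m s) := Nat.sInf_mem hne
  by_cases h1 : m ≤ s + 1
  · by_cases hm1 : m = 1
    · have hT : tRep m s = 0 := by
        have : tRep m s ≤ 0 := Nat.sInf_le (by simp [hm1])
        omega
      subst hm1
      have hp : pRev 1 s = 0 := by simp [pRev, hT]
      rw [hp]
      norm_num
    · have hT : tRep m s = 1 := by
        have hle : tRep m s ≤ 1 := Nat.sInf_le (by simpa using h1)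
        have h0 : tRep m s ≠ 0 := by
          intro h
          rw [h] at hmem
          simp at hmem
          omega
        omega
      have hp : pRev m s = (m : ℤ) - 1 := by
        simp [pRev, hT]
      exact ⟨le_of_eq hp.symm, ⟨fun _ => h1, fun _ => hp⟩⟩
  · have hT2 : 2 ≤ tRep m s := by
      by_contra h
      push_neg at h
      have : tRep m s = 0 ∨ tRep m s = 1 := by omega
      rcases this with h' | h' <;> rw [h'] at hmem <;> simp at hmem <;> omega
    have hmin : (s + (tRep m s - 1)).choose (tRep m s - 1) < m := by
      by_contra h
      push_neg at h
      have : tRep m s ≤ tRep m s - 1 := Nat.sInf_le h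
      omega
    have hkey : (s + tRep m s).choose (tRep m s - 1) ≤ (tRep m s - 1) * m := by
      have heq : s + tRep m s = s + (tRep m s - 1) + 1 := by omega
      rw [heq]
      exact key_ineq s (tRep m s - 1) m hs (by omega) (by omega) hmin
    have hTne : tRep m s ≠ 0 := by omega
    have hstrict : (m : ℤ) - 1 < pRev m s := by
      unfold pRev
      rw [if_neg hTne]
      have hcast : ((s + tRep m s).choose (tRep m s - 1) : ℤ) ≤ ((tRep m s : ℤ) - 1) * m := by
        have h6 : ((tRep m s - 1 : ℕ) : ℤ) = (tRep m s : ℤ) - 1 := by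
          omega
        calc ((s + tRep m s).choose (tRep m s - 1) : ℤ)
            ≤ ((tRep m s - 1 : ℕ) : ℤ) * m := by exact_mod_cast hkey
          _ = ((tRep m s : ℤ) - 1) * m := by rw [h6]
      have hm1 : (1 : ℤ) ≤ (m : ℤ) := by exact_mod_cast hm
      nlinarith [hcast]
    exact ⟨le_of_lt hstrict, ⟨fun h => by omega, fun h => absurd h h1⟩⟩
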